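/- Let Φ be a reduced root system and M a ℤ-module. The signed reversal operators commute with the coboundary: ρ̂^{n+1} ∘ dⁿ = dⁿ ∘ ρ̂ⁿ as maps Cⁿ(Φ,M) → Cⁿ⁺¹(Φ,M), for every n ≥ 1. -/

import Mathlib

open scoped RealInnerProductSpace

/-- A reduced root system `Φ` in a real inner product space `V`:
a finite set of nonzero vectors spanning `V`, closed under the reflections it determines,
with integral Cartan numbers, such that the only multiples of a root in `Φ` are `±α`. -/
structure ReducedRootSystem (V : Type) [NormedAddCommGroup V] [InnerProductSpace ℝ V] :
    Type where
  roots : Set V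
  finite : roots.Finite
  nonzero : ∀ α ∈ roots, α ≠ 0
  spans : Submodule.span ℝ roots = ⊤
  reflect_mem : ∀ α ∈ roots, ∀ β ∈ roots, β - (2 * ⟪β, α⟫ / ⟪α, α⟫) • α ∈ roots
  integral : ∀ α ∈ roots, ∀ β ∈ roots, ∃ n : ℤ, 2 * ⟪β, α⟫ / ⟪α, α⟫ = (n : ℝ)
  reduced : ∀ α ∈ roots, ∀ t : ℝ, t • α ∈ roots → t = 1 ∨ t = -1

variable {V : Type} [NormedAddCommGroup V] [InnerProductSpace ℝ V]

/-- `Φ₀ = Φ ∪ {0}`. -/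
def rootsZero (Φ : ReducedRootSystem V) : Set V := insert 0 Φ.roots

/-- Contraction of a tuple at position `j` (adding the `j`-th and `(j+1)`-st entries). -/
def contractAt (l : List V) (j : ℕ) : List V :=
  l.take j ++ (l.getD j 0 + l.getD (j + 1) 0) :: l.drop (j + 2)

/-- `IsRootChainAux Φ n l`: the tuple `l` of length `n` is a generator of `T_n(Φ)`:
`T₁(Φ) = Φ₀`, and an `n`-tuple with entries in `Φ₀` lies in `T_n(Φ)` iff all its
contractions lie in `T_{n-1}(Φ)`. -/
def IsRootChainAux (Φ : ReducedRootSystem V) : ℕ → List V → Prop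
  | 0, _ => False
  | 1, l => ∃ r ∈ rootsZero Φ, l = [r]
  | n + 2, l => l.length = n + 2 ∧ (∀ r ∈ l, r ∈ rootsZero Φ) ∧
      ∀ j, j + 1 < l.length → IsRootChainAux Φ (n + 1) (contractAt l j)

/-- `l` is a generator of `T_{l.length}(Φ)`. -/
def IsRootChain (Φ : ReducedRootSystem V) (l : List V) : Prop := IsRootChainAux Φ l.length l

open Classical in
/-- Evaluation of a cochain on a chain generator: tuples containing `0` are identified with
the zero chain `0ₙ`, on which any cochain vanishes. -/
noncomputable def chainEv {M : Type} [Zero M] (ω : List V → M) (l : List V) : M :=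
  if (0 : V) ∈ l then 0 else ω l

/-- The coboundary operator `dⁿ` on cochains, `dⁿωⁿ(r₀|⋯|rₙ) = ωⁿ(∂ⁿ[r₀|⋯|rₙ])`. -/
noncomputable def cobd {M : Type} [AddCommGroup M] (ω : List V → M) (l : List V) : M :=
  chainEv ω l.tail
    + (∑ j ∈ Finset.range (l.length - 1), ((-1 : ℤ) ^ (j + 1)) • chainEv ω (contractAt l j))
    - ((-1 : ℤ) ^ (l.length - 1)) • chainEv ω l.dropLast

/-- `κₙ = C(n+1,2) + 1`. -/
def kappa (n : ℕ) : ℕ := Nat.choose (n + 1) 2 + 1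

/-- The signed reversal operator `ρ̂ⁿ` on `n`-cochains: `(ρ̂ⁿω)(φ) = (-1)^{κₙ} ω(ρⁿφ)`. -/
noncomputable def rhoHat {M : Type} [AddCommGroup M] (n : ℕ) (ω : List V → M)
    (l : List V) : M :=
  ((-1 : ℤ) ^ kappa n) • ω l.reverse


private lemma negOnePowCongr (a b : ℕ) (h : a % 2 = b % 2) : ((-1 : ℤ)) ^ a = (-1) ^ b := by
  rcases Nat.even_or_odd a with ha | ha
  · have := Nat.even_iff.mp ha
    rw [ha.neg_one_pow, (Nat.even_iff.mpr (by omega : b % 2 = 0)).neg_one_pow]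
  · have := Nat.odd_iff.mp ha
    rw [ha.neg_one_pow, (Nat.odd_iff.mpr (by omega : b % 2 = 1)).neg_one_pow]

private lemma reverse_contractAt {V : Type} [NormedAddCommGroup V] [InnerProductSpace ℝ V]
    (l : List V) (j : ℕ) (h : j + 1 < l.length) :
    (contractAt l j).reverse = contractAt l.reverse (l.length - 2 - j) := by
  unfold contractAt
  have h1 : j < l.length := by omega
  have hk1 : l.length - 2 - j < l.reverse.length := by simp; omega
  have hk2 : l.length - 2 - j + 1 < l.reverse.length := by simp; omega
  have g1 : l.reverse.getD (l.length - 2 - j) 0 = l.getD (j + 1) 0 := by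
    rw [List.getD_eq_getElem _ 0 hk1, List.getD_eq_getElem _ 0 h, List.getElem_reverse]
    congr 1; omega
  have g2 : l.reverse.getD (l.length - 2 - j + 1) 0 = l.getD j 0 := by
    rw [List.getD_eq_getElem _ 0 hk2, List.getD_eq_getElem _ 0 h1, List.getElem_reverse]
    congr 1; omega
  rw [List.reverse_append, List.reverse_cons, List.reverse_drop, List.reverse_take, g1, g2]
  have e1 : l.length - (j + 2) = l.length - 2 - j := by omega
  have e2 : l.length - j = l.length - 2 - j + 2 := by omega
  rw [e1, e2, add_comm (l.getD (j + 1) 0) (l.getD j 0), List.append_assoc,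
    List.singleton_append]

/-- The signed reversal operators commute with the coboundary:
`ρ̂ⁿ⁺¹ ∘ dⁿ = dⁿ ∘ ρ̂ⁿ` as maps `Cⁿ(Φ,M) → Cⁿ⁺¹(Φ,M)`, for every `n ≥ 1`,
i.e. the two sides agree on every chain in `T_{n+1}(Φ)`. -/
theorem rhoHat_comm_coboundary
    {V : Type} [NormedAddCommGroup V] [InnerProductSpace ℝ V] [FiniteDimensional ℝ V]
    (Φ : ReducedRootSystem V) (M : Type) [AddCommGroup M] (n : ℕ) (hn : 1 ≤ n)
    (ω : List V → M) (l : List V) (hlen : l.length = n + 1) (hl : IsRootChain Φ l) :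
    rhoHat (n + 1) (cobd ω) l = cobd (rhoHat n ω) l :=  by
  have hrl : l.reverse.length = n + 1 := by simpa using hlen
  have hkap : kappa (n + 1) = kappa n + (n + 1) := by
    unfold kappa
    rw [show n + 1 + 1 = (n + 1) + 1 from rfl, Nat.choose_succ_succ]
    simp [Nat.choose_one_right]
    ring
  have hch : ∀ t : List V, chainEv (rhoHat n ω) t
      = ((-1 : ℤ) ^ (kappa n)) • chainEv ω t.reverse := by
    intro t
    unfold chainEv rhoHat
    by_cases h : (0 : V) ∈ t <;> simp [h, List.mem_reverse]
  have hdl : l.reverse.dropLast = l.tail.reverse := by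
    have h := List.tail_reverse (l := l.reverse)
    rw [List.reverse_reverse] at h
    rw [h, List.reverse_reverse]
  simp only [rhoHat]
  simp only [cobd]
  simp only [hch]
  simp only [List.length_reverse, hlen, Nat.add_sub_cancel]
  have hsum : ∑ j ∈ Finset.range n, ((-1 : ℤ) ^ (j + 1)) • chainEv ω (contractAt l.reverse j)
      = ∑ j ∈ Finset.range n,
          ((-1 : ℤ) ^ (n + j)) • chainEv ω ((contractAt l j).reverse) := by
    rw [← Finset.sum_range_reflect
      (fun j => ((-1 : ℤ) ^ (n + j)) • chainEv ω ((contractAt l j).reverse)) n]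
    refine Finset.sum_congr rfl (fun j hj => ?_)
    have hj' : j < n := Finset.mem_range.mp hj
    have hc : contractAt l.reverse j = (contractAt l (n - 1 - j)).reverse := by
      have h := reverse_contractAt l.reverse j (by rw [hrl]; omega)
      rw [List.reverse_reverse, hrl] at h
      rw [← List.reverse_reverse (contractAt l.reverse j), h,
        show n + 1 - 2 - j = n - 1 - j from by omega]
    rw [hc]
    congr 1
    exact negOnePowCongr _ _ (by omega)
  have hS : ∀ (j : ℕ) (x : M), ((-1 : ℤ) ^ (kappa (n + 1))) • (((-1 : ℤ) ^ (n + j)) • x)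
      = ((-1 : ℤ) ^ (j + 1)) • (((-1 : ℤ) ^ (kappa n)) • x) := by
    intro j x
    rw [smul_smul, smul_smul, ← pow_add, ← pow_add]
    congr 1
    exact negOnePowCongr _ _ (by omega)
  have h1 : ∀ x : M, ((-1 : ℤ) ^ (kappa (n + 1))) • (((-1 : ℤ) ^ n) • x)
      = -(((-1 : ℤ) ^ (kappa n)) • x) := by
    intro x
    rw [smul_smul, ← pow_add,
      show ((-1 : ℤ)) ^ (kappa (n + 1) + n) = (-1) ^ (kappa n + 1) from
        negOnePowCongr _ _ (by omega),
      pow_succ, mul_neg_one, neg_smul]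
  have h2 : ∀ x : M, ((-1 : ℤ) ^ (kappa (n + 1))) • x
      = -(((-1 : ℤ) ^ n) • (((-1 : ℤ) ^ (kappa n)) • x)) := by
    intro x
    rw [smul_smul, ← pow_add, ← neg_smul,
      show (-((-1 : ℤ) ^ (n + kappa n))) = (-1) ^ (n + kappa n + 1) from by
        rw [pow_succ, mul_neg_one]]
    congr 1
    exact negOnePowCongr _ _ (by omega)
  rw [List.tail_reverse, hdl, hsum]
  rw [smul_sub, smul_add, Finset.smul_sum]
  rw [Finset.sum_congr rfl (fun j _ => hS j _)]
  rw [h1, h2]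
  abel
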